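/- Let Q_m and Q'_m be the suprema of the empirical process over sampling with and without replacement respectively, for a finite mean-zero class F of [−1,1]-valued functions on a finite set of size N, with σ² = sup_{f∈F} Var[f], and set v = mσ² + 2E[Q_m]. Assuming Bousquet's bound E[exp(λ(Q_m − E[Q_m]))] ≤ exp(v(e^λ − λ − 1)) for all λ ≥ 0, one has for every ε ≥ 0: P{Q'_m − E[Q_m] ≥ ε} ≤ exp(−v·h(ε/v)), where h(u) = (1+u)log(1+u) − u. -/

import Mathlib

set_option maxHeartbeats 1000000
open Finset

lemma dfadd (n a b : ℕ) :
    n.descFactorial (a + b) = n.descFactorial a * (n - a).descFactorial b := by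
  induction b with
  | zero => simp
  | succ b ih =>
      rw [show a + (b+1) = (a+b)+1 from rfl, Nat.descFactorial_succ, ih,
        Nat.descFactorial_succ, Nat.sub_sub]
      ring

/-- counting embeddings with prescribed values on a finset -/
lemma card_ext {α β : Type*} [Fintype α] [Fintype β] [DecidableEq α] [DecidableEq β]
    (A : Finset α) (v : α → β) (hv : Set.InjOn v A) :
    Fintype.card {ω : α ↪ β // ∀ a ∈ A, ω a = v a}
      = (Fintype.card β - A.card).descFactorial (Fintype.card α - A.card) := by
  classical
  have hAv : (A.image v).card = A.card := Finset.card_image_of_injOn hv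
  have e : {ω : α ↪ β // ∀ a ∈ A, ω a = v a} ≃ ((↥(Aᶜ) : Type _) ↪ (↥((A.image v)ᶜ) : Type _)) := by
    refine
      { toFun := fun ω =>
          ⟨fun x => ⟨ω.1 x.1, ?_⟩, ?_⟩
        invFun := fun e =>
          ⟨⟨fun x => if h : x ∈ A then v x else (e ⟨x, Finset.mem_compl.mpr h⟩).1, ?_⟩, ?_⟩
        left_inv := ?_
        right_inv := ?_ }
    · -- ω x ∉ A.image v
      refine Finset.mem_compl.mpr fun hmem => ?_
      obtain ⟨a, ha, hva⟩ := Finset.mem_image.mp hmem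
      have : ω.1 a = ω.1 x.1 := by rw [ω.2 a ha, hva]
      exact (Finset.mem_compl.mp x.2) (ω.1.injective this ▸ ha)
    · intro x y hxy
      apply Subtype.ext
      exact ω.1.injective (congrArg Subtype.val hxy)
    · -- injectivity of glued map
      intro x y hxy
      by_cases hx : x ∈ A <;> by_cases hy : y ∈ A <;> simp only [hx, hy, dif_pos, dif_neg,
        not_false_iff] at hxy
      · exact hv hx hy hxy
      · exact absurd (hxy ▸ Finset.mem_image_of_mem v hx)
          (Finset.mem_compl.mp (e ⟨y, Finset.mem_compl.mpr hy⟩).2)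
      · exact absurd (hxy.symm ▸ Finset.mem_image_of_mem v hy)
          (Finset.mem_compl.mp (e ⟨x, Finset.mem_compl.mpr hx⟩).2)
      · exact Subtype.mk_eq_mk.mp (e.injective (Subtype.ext hxy))
    · intro a ha
      exact dif_pos ha
    · -- left_inv
      intro ω
      apply Subtype.ext
      apply Function.Embedding.ext
      intro x
      by_cases hx : x ∈ A
      · simp [hx, (ω.2 x hx).symm]
      · simp [hx]
        rfl
    · -- right_inv
      intro e
      apply Function.Embedding.ext
      intro x
      have hx : (x : α) ∉ A := Finset.mem_compl.mp x.2
      apply Subtype.ext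
      exact dif_neg hx
  rw [Fintype.card_congr e, Fintype.card_embedding_eq, Fintype.card_coe, Fintype.card_coe,
    Finset.card_compl, Finset.card_compl, hAv]

def ndist {α β : Type*} [Fintype α] [DecidableEq β] (u : α → β) : ℕ :=
  (Finset.univ.image u).card

lemma card_compat {m N : ℕ} (u : Fin m → Fin N) :
    Fintype.card {g : Fin m → Fin m // ∀ i i', g i = g i' ↔ u i = u i'}
      = m.descFactorial (ndist u) := by
  classical
  have hex : ∀ s : ↥(Finset.univ.image u), ∃ i : Fin m, u i = s.1 := by
    rintro ⟨s, hs⟩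
    obtain ⟨i, -, hi⟩ := Finset.mem_image.mp hs
    exact ⟨i, hi⟩
  choose pick hpick using hex
  have e : {g : Fin m → Fin m // ∀ i i', g i = g i' ↔ u i = u i'}
      ≃ ((↥(Finset.univ.image u) : Type _) ↪ Fin m) := by
    refine
      { toFun := fun g => ⟨fun s => g.1 (pick s), ?_⟩
        invFun := fun φ => ⟨fun i => φ ⟨u i, Finset.mem_image_of_mem u (Finset.mem_univ i)⟩, ?_⟩
        left_inv := ?_
        right_inv := ?_ }
    · intro s t hst
      have := (g.2 _ _).mp hst
      rw [hpick s, hpick t] at this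
      exact Subtype.ext this
    · intro i i'
      constructor
      · intro h
        exact Subtype.mk_eq_mk.mp (φ.injective h)
      · intro h
        exact congrArg φ (Subtype.ext h)
    · intro g
      apply Subtype.ext
      funext i
      exact (g.2 _ _).mpr (hpick ⟨u i, _⟩)
    · intro φ
      apply Function.Embedding.ext
      intro s
      exact congrArg φ (Subtype.ext (hpick s))
  rw [Fintype.card_congr e, Fintype.card_embedding_eq, Fintype.card_coe, Fintype.card_fin, ndist]

lemma ndist_compat {m N : ℕ} (u : Fin m → Fin N) (g : Fin m → Fin m)
    (hg : ∀ i i', g i = g i' ↔ u i = u i') : ndist g = ndist u := by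
  classical
  unfold ndist
  have hex : ∀ a ∈ Finset.univ.image g, ∃ i, g i = a := by
    intro a ha
    obtain ⟨i, -, hi⟩ := Finset.mem_image.mp ha
    exact ⟨i, hi⟩
  choose pick hpick using hex
  apply Finset.card_bij (fun a ha => u (pick a ha))
  · intro a ha
    exact Finset.mem_image_of_mem u (Finset.mem_univ _)
  · intro a ha b hb hab
    have := (hg (pick a ha) (pick b hb)).mpr hab
    rw [hpick a ha, hpick b hb] at this
    exact this
  · intro b hb
    obtain ⟨i, -, hi⟩ := Finset.mem_image.mp hb
    have hgi : g i ∈ Finset.univ.image g := Finset.mem_image_of_mem g (Finset.mem_univ i)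
    refine ⟨g i, hgi, ?_⟩
    have := (hg (pick (g i) hgi) i).mp (hpick (g i) hgi)
    rw [this, hi]

noncomputable def wgt (N : ℕ) {m : ℕ} (g : Fin m → Fin m) : ℝ :=
  (N.descFactorial (ndist g) : ℝ) / ((N : ℝ) ^ m * (m.descFactorial (ndist g) : ℝ))

lemma L1 {m N : ℕ} (hmN : m ≤ N) (hN : 0 < N) (u : Fin m → Fin N) :
    ∑ ω : Fin m ↪ Fin N, ∑ g : Fin m → Fin m, (if ⇑ω ∘ g = u then wgt N g else 0)
      = (N.descFactorial m : ℝ) / (N : ℝ) ^ m := by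
  classical
  set k := ndist u with hk
  have hkm : k ≤ m := by
    rw [hk, ndist]
    exact le_trans (Finset.card_image_le) (by simp)
  rw [Finset.sum_comm]
  have hcompat : ∀ g : Fin m → Fin m, (∃ ω : Fin m ↪ Fin N, ⇑ω ∘ g = u) →
      ∀ i i', g i = g i' ↔ u i = u i' := by
    rintro g ⟨ω, hω⟩ i i'
    constructor
    · intro h
      rw [← congrFun hω i, ← congrFun hω i']
      exact congrArg ω h
    · intro h
      rw [← congrFun hω i, ← congrFun hω i'] at h
      exact ω.injective h
  have step : ∀ g : Fin m → Fin m,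
      (∑ ω : Fin m ↪ Fin N, if ⇑ω ∘ g = u then wgt N g else 0)
        = if (∀ i i', g i = g i' ↔ u i = u i') then
            ((N - k).descFactorial (m - k) : ℝ) * wgt N g else 0 := by
    intro g
    by_cases hg : ∀ i i', g i = g i' ↔ u i = u i'
    · rw [if_pos hg]
      have hcount : (Finset.univ.filter (fun ω : Fin m ↪ Fin N => ⇑ω ∘ g = u)).card
          = (N - k).descFactorial (m - k) := by
        have hex : ∀ a ∈ Finset.univ.image g, ∃ i, g i = a := by
          intro a ha
          obtain ⟨i, -, hi⟩ := Finset.mem_image.mp ha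
          exact ⟨i, hi⟩
        choose pick hpick using hex
        set v : Fin m → Fin N := fun a =>
          if h : a ∈ Finset.univ.image g then u (pick a h) else ⟨0, hN⟩ with hv0
        have hequiv : ∀ ω : Fin m ↪ Fin N,
            (⇑ω ∘ g = u) ↔ (∀ a ∈ Finset.univ.image g, ω a = v a) := by
          intro ω
          constructor
          · intro h a ha
            rw [hv0]
            simp only [ha, dif_pos]
            have h3 := congrFun h (pick a ha)
            simp only [Function.comp_apply] at h3
            rw [hpick a ha] at h3
            exact h3
          · intro h
            funext i
            have hgi : g i ∈ Finset.univ.image g := Finset.mem_image_of_mem g (Finset.mem_univ i)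
            have := h (g i) hgi
            rw [hv0] at this
            simp only [hgi, dif_pos] at this
            have h2 : u (pick (g i) hgi) = u i := (hg _ _).mp (hpick (g i) hgi)
            simp only [Function.comp_apply]
            rw [this, h2]
        have hvinj : Set.InjOn v (Finset.univ.image g) := by
          intro a ha b hb hab
          rw [hv0] at hab
          simp only [Finset.mem_coe] at ha hb
          simp only [ha, hb, dif_pos] at hab
          have := (hg _ _).mpr hab
          rw [hpick a ha, hpick b hb] at this
          exact this
        have hAcard : (Finset.univ.image g).card = k := by
          rw [hk]
          exact ndist_compat u g hg
        have hcex := card_ext (Finset.univ.image g) v hvinj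
        rw [Fintype.card_fin, Fintype.card_fin, hAcard] at hcex
        rw [← Fintype.card_subtype]
        refine (Fintype.card_congr (Equiv.subtypeEquivRight hequiv)).trans ?_
        convert hcex using 2
      calc (∑ ω : Fin m ↪ Fin N, if ⇑ω ∘ g = u then wgt N g else 0)
          = ∑ ω ∈ Finset.univ.filter (fun ω : Fin m ↪ Fin N => ⇑ω ∘ g = u), wgt N g := by
            rw [Finset.sum_filter]
        _ = ((N - k).descFactorial (m - k) : ℝ) * wgt N g := by
            rw [Finset.sum_const, hcount, nsmul_eq_mul]
    · rw [if_neg hg]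
      apply Finset.sum_eq_zero
      intro ω _
      rw [if_neg]
      intro h
      exact hg (hcompat g ⟨ω, h⟩)
  have hwconst : ∀ g ∈ Finset.univ.filter (fun g : Fin m → Fin m => ∀ i i', g i = g i' ↔ u i = u i'),
      ((N - k).descFactorial (m - k) : ℝ) * wgt N g
        = ((N - k).descFactorial (m - k) : ℝ) *
            ((N.descFactorial k : ℝ) / ((N : ℝ) ^ m * (m.descFactorial k : ℝ))) := by
    intro g hg
    rw [Finset.mem_filter] at hg
    rw [wgt, ndist_compat u g hg.2, hk]
  have hcard2 : (Finset.univ.filter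
      (fun g : Fin m → Fin m => ∀ i i', g i = g i' ↔ u i = u i')).card = m.descFactorial k := by
    rw [← Fintype.card_subtype, card_compat u, hk]
  calc (∑ g : Fin m → Fin m, ∑ ω : Fin m ↪ Fin N, if ⇑ω ∘ g = u then wgt N g else 0)
      = ∑ g : Fin m → Fin m, (if (∀ i i', g i = g i' ↔ u i = u i') then
          ((N - k).descFactorial (m - k) : ℝ) * wgt N g else 0) :=
        Finset.sum_congr rfl (fun g _ => step g)
    _ = ∑ g ∈ Finset.univ.filter (fun g : Fin m → Fin m => ∀ i i', g i = g i' ↔ u i = u i'),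
          ((N - k).descFactorial (m - k) : ℝ) * wgt N g := (Finset.sum_filter _ _).symm
    _ = ∑ _g ∈ Finset.univ.filter (fun g : Fin m → Fin m => ∀ i i', g i = g i' ↔ u i = u i'),
          (((N - k).descFactorial (m - k) : ℝ) *
            ((N.descFactorial k : ℝ) / ((N : ℝ) ^ m * (m.descFactorial k : ℝ)))) :=
        Finset.sum_congr rfl hwconst
    _ = (m.descFactorial k : ℝ) * (((N - k).descFactorial (m - k) : ℝ) *
          ((N.descFactorial k : ℝ) / ((N : ℝ) ^ m * (m.descFactorial k : ℝ)))) := by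
        rw [Finset.sum_const, hcard2, nsmul_eq_mul]
    _ = (N.descFactorial m : ℝ) / (N : ℝ) ^ m := by
        have hmk : (m.descFactorial k : ℝ) ≠ 0 := by
          simp only [ne_eq, Nat.cast_eq_zero, Nat.descFactorial_eq_zero_iff_lt]
          exact Nat.not_lt.mpr hkm
        have hNm : ((N : ℝ) ^ m) ≠ 0 := by positivity
        have hsplit : N.descFactorial m = N.descFactorial k * (N - k).descFactorial (m - k) := by
          rw [← dfadd]
          congr 1
          exact (Nat.add_sub_cancel' hkm).symm
        rw [hsplit]
        push_cast
        field_simp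

lemma wgt_swap {m N : ℕ} (σ : Equiv.Perm (Fin m)) (g : Fin m → Fin m) :
    wgt N (⇑σ ∘ g) = wgt N g := by
  have : ndist (⇑σ ∘ g) = ndist g := by
    unfold ndist
    rw [← Finset.image_image]
    exact Finset.card_image_of_injective _ σ.injective
  rw [wgt, wgt, this]

lemma sum_wgt_one {m N : ℕ} (hmN : m ≤ N) (hN : 0 < N) :
    ∑ g : Fin m → Fin m, wgt N g = 1 := by
  classical
  have h1 : ∀ ω : Fin m ↪ Fin N, ∀ g : Fin m → Fin m,
      (∑ u : Fin m → Fin N, if ⇑ω ∘ g = u then wgt N g else 0) = wgt N g := by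
    intro ω g
    rw [Finset.sum_ite_eq univ (⇑ω ∘ g) (fun _ => wgt N g), if_pos (Finset.mem_univ _)]
  have h2 : (∑ u : Fin m → Fin N, ∑ ω : Fin m ↪ Fin N,
      ∑ g : Fin m → Fin m, if ⇑ω ∘ g = u then wgt N g else 0)
      = (N ^ m : ℝ) * ((N.descFactorial m : ℝ) / (N : ℝ) ^ m) := by
    rw [Finset.sum_congr rfl (fun u _ => L1 hmN hN u), Finset.sum_const, nsmul_eq_mul]
    congr 1
    simp [Fintype.card_fun]
  rw [Finset.sum_comm] at h2
  have h3 : ∀ ω : Fin m ↪ Fin N, (∑ u : Fin m → Fin N,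
      ∑ g : Fin m → Fin m, if ⇑ω ∘ g = u then wgt N g else 0) = ∑ g : Fin m → Fin m, wgt N g := by
    intro ω
    rw [Finset.sum_comm]
    exact Finset.sum_congr rfl (fun g _ => h1 ω g)
  rw [Finset.sum_congr rfl (fun ω _ => h3 ω), Finset.sum_const, nsmul_eq_mul] at h2
  have hcard : (((Finset.univ : Finset (Fin m ↪ Fin N)).card : ℕ) : ℝ)
      = (N.descFactorial m : ℝ) := by
    rw [Finset.card_univ, Fintype.card_embedding_eq, Fintype.card_fin, Fintype.card_fin]
  rw [hcard] at h2
  have hdf : (N.descFactorial m : ℝ) ≠ 0 := by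
    simp only [ne_eq, Nat.cast_eq_zero, Nat.descFactorial_eq_zero_iff_lt]
    exact Nat.not_lt.mpr hmN
  have hNm : ((N : ℝ) ^ m) ≠ 0 := by positivity
  have : (N ^ m : ℝ) * ((N.descFactorial m : ℝ) / (N : ℝ) ^ m) = (N.descFactorial m : ℝ) := by
    field_simp
  rw [this] at h2
  exact mul_left_cancel₀ hdf (h2.trans (mul_one _).symm)

lemma colsum {m N : ℕ} (hmN : m ≤ N) (hN : 0 < N) (j : Fin m) :
    ∑ g : Fin m → Fin m, wgt N g * ((Finset.univ.filter (fun i => g i = j)).card : ℝ) = 1 := by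
  classical
  set T : Fin m → ℝ := fun j =>
    ∑ g : Fin m → Fin m, wgt N g * ((Finset.univ.filter (fun i => g i = j)).card : ℝ) with hT
  have hsym : ∀ j j' : Fin m, T j = T j' := by
    intro j j'
    rw [hT]
    apply Fintype.sum_equiv (Equiv.arrowCongr (Equiv.refl (Fin m)) (Equiv.swap j' j))
    intro g
    simp only [Equiv.arrowCongr_apply, Equiv.coe_refl, Equiv.refl_symm, Function.comp_id]
    have harr : wgt N (((Equiv.refl (Fin m)).arrowCongr (Equiv.swap j' j)) g)
        = wgt N g := wgt_swap (Equiv.swap j' j) g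
    rw [harr]
    congr 1
    refine congrArg _ (congrArg Finset.card (Finset.filter_congr ?_))
    intro i _
    simp only [Function.comp_apply]
    rw [Equiv.apply_eq_iff_eq_symm_apply, Equiv.symm_swap, Equiv.swap_apply_left]
  have hsum : ∑ j' : Fin m, T j' = (m : ℝ) := by
    rw [hT]
    rw [Finset.sum_comm]
    have : ∀ g : Fin m → Fin m,
        (∑ j' : Fin m, wgt N g * ((Finset.univ.filter (fun i => g i = j')).card : ℝ))
          = wgt N g * m := by
      intro g
      rw [← Finset.mul_sum]
      congr 1
      have hfib : (Finset.univ : Finset (Fin m)).card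
          = ∑ j' : Fin m, (Finset.univ.filter (fun i => g i = j')).card :=
        Finset.card_eq_sum_card_fiberwise (fun x _ => Finset.mem_univ (g x))
      rw [← Nat.cast_sum, ← hfib]
      simp
    rw [Finset.sum_congr rfl (fun g _ => this g), ← Finset.sum_mul, sum_wgt_one hmN hN, one_mul]
  have hm0 : 0 < m := j.pos
  have hmT : (m : ℝ) * T j = (m : ℝ) := by
    calc (m : ℝ) * T j = ∑ _j' : Fin m, T j := by rw [Finset.sum_const, nsmul_eq_mul]; simp
      _ = ∑ j' : Fin m, T j' := Finset.sum_congr rfl (fun j' _ => hsym j j')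
      _ = (m : ℝ) := hsum
  have hmne : (m : ℝ) ≠ 0 := Nat.cast_ne_zero.mpr hm0.ne'
  calc T j = ((m : ℝ) * T j) / m := by field_simp
    _ = 1 := by rw [hmT]; field_simp

lemma keyavg {m N : ℕ} (hmN : m ≤ N) (hN : 0 < N) (h : Fin m → ℝ) :
    ∑ g : Fin m → Fin m, wgt N g * (∑ i, h (g i)) = ∑ j, h j := by
  classical
  have step : ∀ g : Fin m → Fin m, (∑ i, h (g i))
      = ∑ j : Fin m, ((Finset.univ.filter (fun i => g i = j)).card : ℝ) * h j := by
    intro g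
    have e1 : ∀ i : Fin m, h (g i) = ∑ j : Fin m, if g i = j then h j else 0 := by
      intro i
      rw [Finset.sum_ite_eq univ (g i) h, if_pos (Finset.mem_univ _)]
    rw [Finset.sum_congr rfl (fun i _ => e1 i), Finset.sum_comm]
    apply Finset.sum_congr rfl
    intro j _
    rw [Finset.sum_ite, Finset.sum_const_zero, add_zero, Finset.sum_const, nsmul_eq_mul]
  calc ∑ g : Fin m → Fin m, wgt N g * (∑ i, h (g i))
      = ∑ g : Fin m → Fin m, ∑ j : Fin m,
          wgt N g * (((Finset.univ.filter (fun i => g i = j)).card : ℝ) * h j) := by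
        apply Finset.sum_congr rfl
        intro g _
        rw [step g, Finset.mul_sum]
    _ = ∑ j : Fin m, (∑ g : Fin m → Fin m,
          wgt N g * ((Finset.univ.filter (fun i => g i = j)).card : ℝ)) * h j := by
        rw [Finset.sum_comm]
        apply Finset.sum_congr rfl
        intro j _
        rw [Finset.sum_mul]
        apply Finset.sum_congr rfl
        intro g _
        ring
    _ = ∑ j : Fin m, h j := by
        apply Finset.sum_congr rfl
        intro j _
        rw [colsum hmN hN j, one_mul]

lemma wgt_nonneg {m N : ℕ} (g : Fin m → Fin m) : 0 ≤ wgt N g := by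
  rw [wgt]
  positivity

lemma mgf_comp {m N : ℕ} (hmN : m ≤ N) (hN : 0 < N) (F : Finset (Fin N → ℝ)) (hF : F.Nonempty)
    (l : ℝ) (hl : 0 ≤ l) (E : ℝ) :
    ∑ ω : Fin m ↪ Fin N, Real.exp (l * ((F.sup' hF fun f => ∑ i, f (ω i)) - E))
      ≤ ((N.descFactorial m : ℝ) / (N : ℝ) ^ m) *
        ∑ u : Fin m → Fin N, Real.exp (l * ((F.sup' hF fun f => ∑ i, f (u i)) - E)) := by
  classical
  set G : (Fin m → Fin N) → ℝ :=
    fun u => Real.exp (l * ((F.sup' hF fun f => ∑ i, f (u i)) - E)) with hG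
  have perω : ∀ ω : Fin m ↪ Fin N, G ⇑ω ≤ ∑ g : Fin m → Fin m, wgt N g * G (⇑ω ∘ g) := by
    intro ω
    obtain ⟨f₀, hf₀, hsup⟩ := Finset.exists_mem_eq_sup' hF (fun f => ∑ i, f (ω i))
    have key : ∑ g : Fin m → Fin m, wgt N g • (l * ((∑ i, f₀ (ω (g i))) - E))
        = l * ((∑ i, f₀ (ω i)) - E) := by
      have h1 : ∑ g : Fin m → Fin m, wgt N g * (∑ i, f₀ (ω (g i)))
          = ∑ i, f₀ (ω i) := keyavg hmN hN (fun j => f₀ (ω j))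
      have h2 : ∑ g : Fin m → Fin m, wgt N g = 1 := sum_wgt_one hmN hN
      calc ∑ g : Fin m → Fin m, wgt N g • (l * ((∑ i, f₀ (ω (g i))) - E))
          = l * ((∑ g : Fin m → Fin m, wgt N g * (∑ i, f₀ (ω (g i))))
              - E * (∑ g : Fin m → Fin m, wgt N g)) := by
            rw [Finset.mul_sum, ← Finset.sum_sub_distrib, Finset.mul_sum]
            apply Finset.sum_congr rfl
            intro g _
            simp only [smul_eq_mul]
            ring
        _ = l * ((∑ i, f₀ (ω i)) - E) := by rw [h1, h2, mul_one]
    have jensen := convexOn_exp.map_sum_le (t := Finset.univ)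
      (w := fun g : Fin m → Fin m => wgt N g)
      (p := fun g : Fin m → Fin m => l * ((∑ i, f₀ (ω (g i))) - E))
      (fun g _ => wgt_nonneg g) (sum_wgt_one hmN hN) (fun g _ => Set.mem_univ _)
    have hstep1 : G ⇑ω = Real.exp (l * ((∑ i, f₀ (ω i)) - E)) := by
      rw [hG]
      simp only
      rw [hsup]
    rw [hstep1, ← key]
    refine le_trans jensen (Finset.sum_le_sum ?_)
    intro g _
    simp only [smul_eq_mul]
    refine mul_le_mul_of_nonneg_left ?_ (wgt_nonneg g)
    rw [hG]
    simp only
    apply Real.exp_le_exp.mpr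
    refine mul_le_mul_of_nonneg_left ?_ hl
    apply sub_le_sub_right
    exact Finset.le_sup' (fun f => ∑ i, f ((⇑ω ∘ g) i)) hf₀
  calc ∑ ω : Fin m ↪ Fin N, G ⇑ω
      ≤ ∑ ω : Fin m ↪ Fin N, ∑ g : Fin m → Fin m, wgt N g * G (⇑ω ∘ g) :=
        Finset.sum_le_sum (fun ω _ => perω ω)
    _ = ∑ ω : Fin m ↪ Fin N, ∑ g : Fin m → Fin m, ∑ u : Fin m → Fin N,
          ((if ⇑ω ∘ g = u then wgt N g else 0) * G u) := by
        refine Finset.sum_congr rfl fun ω _ => Finset.sum_congr rfl fun g _ => ?_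
        have : ∀ u : Fin m → Fin N, (if ⇑ω ∘ g = u then wgt N g else 0) * G u
            = (if ⇑ω ∘ g = u then wgt N g * G u else 0) := by
          intro u
          rw [ite_mul, zero_mul]
        rw [Finset.sum_congr rfl (fun u _ => this u),
          Finset.sum_ite_eq univ (⇑ω ∘ g) (fun u => wgt N g * G u), if_pos (Finset.mem_univ _)]
    _ = ∑ u : Fin m → Fin N, (∑ ω : Fin m ↪ Fin N, ∑ g : Fin m → Fin m,
          (if ⇑ω ∘ g = u then wgt N g else 0)) * G u := by
        rw [Finset.sum_congr rfl (fun (ω : Fin m ↪ Fin N) _ =>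
          Finset.sum_comm (s := (Finset.univ : Finset (Fin m → Fin m)))
            (t := (Finset.univ : Finset (Fin m → Fin N)))
            (f := fun g u => (if ⇑ω ∘ g = u then wgt N g else 0) * G u)),
          Finset.sum_comm]
        apply Finset.sum_congr rfl
        intro u _
        rw [Finset.sum_mul]
        apply Finset.sum_congr rfl
        intro ω _
        rw [Finset.sum_mul]
    _ = ∑ u : Fin m → Fin N, ((N.descFactorial m : ℝ) / (N : ℝ) ^ m) * G u := by
        apply Finset.sum_congr rfl
        intro u _
        rw [L1 hmN hN u]
    _ = ((N.descFactorial m : ℝ) / (N : ℝ) ^ m) * ∑ u : Fin m → Fin N, G u :=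
        (Finset.mul_sum _ _ _).symm


/-- Talagrand-type inequality for sampling without replacement: with
`v = mσ² + 2E[Q_m]` and assuming Bousquet's moment generating function bound for
`Q_m`, for every `ε ≥ 0` one has `P{Q'_m − E[Q_m] ≥ ε} ≤ exp(−v·h(ε/v))`, where
`h u = (1+u)log(1+u) − u`. -/
theorem stmt_14 (N m : ℕ) (hN : 0 < N) (hm : m ≤ N)
    (F : Finset (Fin N → ℝ)) (hF : F.Nonempty)
    (hbound : ∀ f ∈ F, ∀ x, f x ∈ Set.Icc (-1 : ℝ) 1)
    (hmean : ∀ f ∈ F, ∑ x, f x = 0)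
    (σ2 : ℝ)
    (hσ2 : σ2 = F.sup' hF fun f =>
      (1 / (N : ℝ)) * ∑ x, (f x - (1 / (N : ℝ)) * ∑ y, f y) ^ 2)
    (Qm : (Fin m → Fin N) → ℝ)
    (hQm : ∀ ω, Qm ω = F.sup' hF fun f => ∑ i, f (ω i))
    (EQm : ℝ)
    (hEQm : EQm = (1 / (N : ℝ) ^ m) * ∑ ω : Fin m → Fin N, Qm ω)
    (Q' : (Fin m ↪ Fin N) → ℝ)
    (hQ' : ∀ ω, Q' ω = F.sup' hF fun f => ∑ i, f (ω i))
    (v : ℝ) (hv : v = (m : ℝ) * σ2 + 2 * EQm)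
    (hBousquet : ∀ l : ℝ, 0 ≤ l →
      (1 / (N : ℝ) ^ m) * (∑ ω : Fin m → Fin N, Real.exp (l * (Qm ω - EQm)))
        ≤ Real.exp (v * (Real.exp l - l - 1)))
    (ε : ℝ) (hε : 0 ≤ ε) :
    ((Finset.univ.filter fun ω : Fin m ↪ Fin N => ε ≤ Q' ω - EQm).card : ℝ) /
        (Fintype.card (Fin m ↪ Fin N) : ℝ)
      ≤ Real.exp (-(v * ((1 + ε / v) * Real.log (1 + ε / v) - ε / v))) := by
  classical
  have hInjne : Nonempty (Fin m ↪ Fin N) :=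
    ⟨⟨Fin.castLE hm, Fin.castLE_injective hm⟩⟩
  have hInjpos : (0 : ℝ) < (Fintype.card (Fin m ↪ Fin N) : ℝ) := by
    exact_mod_cast Fintype.card_pos
  have hLHS1 : ((Finset.univ.filter fun ω : Fin m ↪ Fin N => ε ≤ Q' ω - EQm).card : ℝ) /
      (Fintype.card (Fin m ↪ Fin N) : ℝ) ≤ 1 := by
    rw [div_le_one hInjpos]
    exact_mod_cast (Finset.card_filter_le _ _).trans_eq (Finset.card_univ)
  have hNmpos : (0 : ℝ) < (N : ℝ) ^ m := by positivity
  -- v ≥ 0 via Jensen applied to Bousquet's bound at l = 1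
  have hcardfun : ((Fintype.card (Fin m → Fin N) : ℕ) : ℝ) = (N : ℝ) ^ m := by
    rw [Fintype.card_fun, Fintype.card_fin, Fintype.card_fin]
    push_cast
    rfl
  have hv0 : 0 ≤ v := by
    have hB := hBousquet 1 zero_le_one
    have hw1 : ∑ _ω : Fin m → Fin N, (1 / (N : ℝ) ^ m) = 1 := by
      rw [Finset.sum_const, nsmul_eq_mul, Finset.card_univ, hcardfun]
      field_simp
    have jensen := convexOn_exp.map_sum_le (t := (Finset.univ : Finset (Fin m → Fin N)))
      (w := fun _ => 1 / (N : ℝ) ^ m)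
      (p := fun ω => 1 * (Qm ω - EQm))
      (fun _ _ => by positivity) hw1 (fun _ _ => Set.mem_univ _)
    have hzero : ∑ ω : Fin m → Fin N, (1 / (N : ℝ) ^ m) • (1 * (Qm ω - EQm)) = 0 := by
      simp only [smul_eq_mul, one_mul]
      rw [← Finset.mul_sum, Finset.sum_sub_distrib, Finset.sum_const, nsmul_eq_mul,
        Finset.card_univ, hcardfun, hEQm]
      field_simp
      ring
    rw [hzero, Real.exp_zero] at jensen
    have h2 : ∑ ω : Fin m → Fin N, (1 / (N : ℝ) ^ m) • Real.exp (1 * (Qm ω - EQm))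
        = (1 / (N : ℝ) ^ m) * ∑ ω : Fin m → Fin N, Real.exp (1 * (Qm ω - EQm)) := by
      simp only [smul_eq_mul]
      rw [Finset.mul_sum]
    have h1 : (1 : ℝ) ≤ Real.exp (v * (Real.exp 1 - 1 - 1)) :=
      le_trans jensen (le_trans (le_of_eq h2) hB)
    have h3 : 0 ≤ v * (Real.exp 1 - 1 - 1) := by
      by_contra hcon
      push_neg at hcon
      have := Real.exp_lt_one_iff.mpr hcon  -- exp x < 1 ↔ x < 0
      linarith
    have he2 : (0 : ℝ) < Real.exp 1 - 1 - 1 := by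
      have := Real.exp_one_gt_d9
      linarith
    nlinarith
  by_cases hε0 : ε = 0
  · subst hε0
    simp only [zero_div, add_zero, Real.log_one, mul_one, mul_zero, sub_zero, neg_zero,
      Real.exp_zero]
    simpa using hLHS1
  by_cases hveq : v = 0
  · subst hveq
    simp only [div_zero, add_zero, Real.log_one, mul_one, mul_zero, sub_zero, zero_mul, neg_zero,
      Real.exp_zero]
    simpa using hLHS1
  have hvpos : 0 < v := lt_of_le_of_ne hv0 (Ne.symm hveq)
  have hεpos : 0 < ε := lt_of_le_of_ne hε (Ne.symm hε0)
  set l := Real.log (1 + ε / v) with hldef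
  have hεv : 0 < ε / v := div_pos hεpos hvpos
  have h1εv : (0 : ℝ) < 1 + ε / v := by linarith
  have hl : 0 ≤ l := Real.log_nonneg (by linarith)
  have hexpl : Real.exp l = 1 + ε / v := Real.exp_log h1εv
  -- Markov / Chernoff step
  have markov : ((Finset.univ.filter fun ω : Fin m ↪ Fin N => ε ≤ Q' ω - EQm).card : ℝ) *
      Real.exp (l * ε) ≤ ∑ ω : Fin m ↪ Fin N, Real.exp (l * (Q' ω - EQm)) := by
    calc ((Finset.univ.filter fun ω : Fin m ↪ Fin N => ε ≤ Q' ω - EQm).card : ℝ) *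
        Real.exp (l * ε)
        = ∑ _ω ∈ Finset.univ.filter fun ω : Fin m ↪ Fin N => ε ≤ Q' ω - EQm,
            Real.exp (l * ε) := by
          rw [Finset.sum_const, nsmul_eq_mul]
      _ ≤ ∑ ω ∈ Finset.univ.filter fun ω : Fin m ↪ Fin N => ε ≤ Q' ω - EQm,
            Real.exp (l * (Q' ω - EQm)) := by
          apply Finset.sum_le_sum
          intro ω hω
          rw [Finset.mem_filter] at hω
          exact Real.exp_le_exp.mpr (mul_le_mul_of_nonneg_left hω.2 hl)
      _ ≤ ∑ ω : Fin m ↪ Fin N, Real.exp (l * (Q' ω - EQm)) := by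
          apply Finset.sum_le_sum_of_subset_of_nonneg (Finset.filter_subset _ _)
          intro ω _ _
          exact (Real.exp_pos _).le
  have hmgf : ∑ ω : Fin m ↪ Fin N, Real.exp (l * (Q' ω - EQm))
      ≤ ((N.descFactorial m : ℝ) / (N : ℝ) ^ m) *
          ∑ u : Fin m → Fin N, Real.exp (l * (Qm u - EQm)) := by
    have := mgf_comp hm hN F hF l hl EQm
    calc ∑ ω : Fin m ↪ Fin N, Real.exp (l * (Q' ω - EQm))
        = ∑ ω : Fin m ↪ Fin N,
            Real.exp (l * ((F.sup' hF fun f => ∑ i, f (ω i)) - EQm)) := by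
          apply Finset.sum_congr rfl
          intro ω _
          rw [hQ' ω]
      _ ≤ ((N.descFactorial m : ℝ) / (N : ℝ) ^ m) *
            ∑ u : Fin m → Fin N,
              Real.exp (l * ((F.sup' hF fun f => ∑ i, f (u i)) - EQm)) := this
      _ = ((N.descFactorial m : ℝ) / (N : ℝ) ^ m) *
            ∑ u : Fin m → Fin N, Real.exp (l * (Qm u - EQm)) := by
          congr 1
          apply Finset.sum_congr rfl
          intro u _
          rw [hQm u]
  have hBl := hBousquet l hl
  have hInjcard : (Fintype.card (Fin m ↪ Fin N) : ℝ) = (N.descFactorial m : ℝ) := by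
    rw [Fintype.card_embedding_eq, Fintype.card_fin, Fintype.card_fin]
  -- combine
  have hcombine : ((Finset.univ.filter fun ω : Fin m ↪ Fin N => ε ≤ Q' ω - EQm).card : ℝ) *
      Real.exp (l * ε) ≤ (Fintype.card (Fin m ↪ Fin N) : ℝ) *
        Real.exp (v * (Real.exp l - l - 1)) := by
    refine le_trans markov (le_trans hmgf ?_)
    rw [hInjcard]
    have hsum : ∑ u : Fin m → Fin N, Real.exp (l * (Qm u - EQm))
        ≤ (N : ℝ) ^ m * Real.exp (v * (Real.exp l - l - 1)) := by
      have := hBl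
      rw [div_mul_eq_mul_div, one_mul] at this
      calc ∑ u : Fin m → Fin N, Real.exp (l * (Qm u - EQm))
          = (N : ℝ) ^ m * ((1 / (N : ℝ) ^ m) *
              ∑ u : Fin m → Fin N, Real.exp (l * (Qm u - EQm))) := by
            field_simp
        _ ≤ (N : ℝ) ^ m * Real.exp (v * (Real.exp l - l - 1)) := by
            exact mul_le_mul_of_nonneg_left hBl hNmpos.le
    calc ((N.descFactorial m : ℝ) / (N : ℝ) ^ m) *
          ∑ u : Fin m → Fin N, Real.exp (l * (Qm u - EQm))
        ≤ ((N.descFactorial m : ℝ) / (N : ℝ) ^ m) *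
            ((N : ℝ) ^ m * Real.exp (v * (Real.exp l - l - 1))) := by
          apply mul_le_mul_of_nonneg_left hsum
          positivity
      _ = (N.descFactorial m : ℝ) * Real.exp (v * (Real.exp l - l - 1)) := by
          field_simp
  -- final algebra
  rw [div_le_iff₀ hInjpos]
  have hexppos : (0 : ℝ) < Real.exp (l * ε) := Real.exp_pos _
  have hexpeq : v * (Real.exp l - l - 1) - l * ε
      = -(v * ((1 + ε / v) * Real.log (1 + ε / v) - ε / v)) := by
    rw [hexpl, ← hldef]
    have hvne : v ≠ 0 := hvpos.ne'
    field_simp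
    ring
  have hfin : ((Finset.univ.filter fun ω : Fin m ↪ Fin N => ε ≤ Q' ω - EQm).card : ℝ)
      ≤ (Fintype.card (Fin m ↪ Fin N) : ℝ) *
          Real.exp (v * (Real.exp l - l - 1) - l * ε) := by
    calc ((Finset.univ.filter fun ω : Fin m ↪ Fin N => ε ≤ Q' ω - EQm).card : ℝ)
        = ((Finset.univ.filter fun ω : Fin m ↪ Fin N => ε ≤ Q' ω - EQm).card : ℝ) *
            Real.exp (l * ε) / Real.exp (l * ε) := by field_simp
      _ ≤ ((Fintype.card (Fin m ↪ Fin N) : ℝ) * Real.exp (v * (Real.exp l - l - 1))) /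
            Real.exp (l * ε) := by gcongr
      _ = (Fintype.card (Fin m ↪ Fin N) : ℝ) *
            Real.exp (v * (Real.exp l - l - 1) - l * ε) := by
          rw [Real.exp_sub]
          ring
  rw [hexpeq] at hfin
  calc ((Finset.univ.filter fun ω : Fin m ↪ Fin N => ε ≤ Q' ω - EQm).card : ℝ)
      ≤ (Fintype.card (Fin m ↪ Fin N) : ℝ) *
          Real.exp (-(v * ((1 + ε / v) * Real.log (1 + ε / v) - ε / v))) := hfin
    _ = Real.exp (-(v * ((1 + ε / v) * Real.log (1 + ε / v) - ε / v))) *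
          (Fintype.card (Fin m ↪ Fin N) : ℝ) := mul_comm _ _
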